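/- Let P be a poset, and let 𝓓 be a meet-specification of P all of whose members are finite. Let X be the set of all nonempty finitely generated 𝓓-filters of P ordered by reverse inclusion, and let e_X : P → X be the map p ↦ p^↑. If L is a lattice and f : P → L is a 𝓓-morphism, then f has enough meets for e_X: for every x ∈ X, the set f '' (e_X⁻¹({x' ∈ X : x' ≥ x})) has a greatest lower bound in L, and it equals the greatest lower bound of f '' S for any finite S ⊆ P such that x is the smallest 𝓓-filter containing S. -/

import Mathlib

universe u

def IsOrdEmb {P X : Type u} [Preorder P] [Preorder X] (e : P → X) : Prop :=
  ∀ a b : P, e a ≤ e b ↔ a ≤ b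

def IsMeetExtension {P X : Type u} [PartialOrder P] [PartialOrder X] (e : P → X) : Prop :=
  IsOrdEmb e ∧ ∀ x : X, IsGLB (e '' {p : P | x ≤ e p}) x

def AlphaSupported {P X : Type u} [PartialOrder P] [PartialOrder X]
    (α : Cardinal.{u}) (eX : P → X) : Prop :=
  ∀ x : X, ∃ S : Set P, Cardinal.mk ↥S < α ∧ IsGLB (eX '' S) x

def AlphaMeetContinuous {P X Q : Type u} [PartialOrder P] [PartialOrder X] [PartialOrder Q]
    (α : Cardinal.{u}) (eX : P → X) (f : P → Q) : Prop :=
  ∀ (q : Q) (S : Set P), S ⊆ f ⁻¹' Set.Ici q → Cardinal.mk ↥S < α →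
    ∃ (qS : Q) (xS : X),
      IsGLB (f '' S) qS ∧ IsGLB (f '' (eX ⁻¹' Set.Ici xS)) qS ∧
      upperBounds S ⊆ eX ⁻¹' Set.Ici xS

/-- `𝓓` is a meet-specification of `P`: every member has a greatest lower bound in `P`,
and all singletons belong to `𝓓`. -/
def IsMeetSpec {P : Type u} [PartialOrder P] (𝓓 : Set (Set P)) : Prop :=
  (∀ S ∈ 𝓓, ∃ m : P, IsGLB S m) ∧ ∀ p : P, {p} ∈ 𝓓

/-- A `𝓓`-filter: an up-set closed under the meets of members of `𝓓`. -/
def IsDFilter {P : Type u} [PartialOrder P] (𝓓 : Set (Set P)) (F : Set P) : Prop :=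
  IsUpperSet F ∧ ∀ S ∈ 𝓓, S ⊆ F → ∀ m : P, IsGLB S m → m ∈ F

/-- `F` is the smallest `𝓓`-filter containing `S`. -/
def SmallestDFilter {P : Type u} [PartialOrder P] (𝓓 : Set (Set P)) (S F : Set P) : Prop :=
  IsDFilter 𝓓 F ∧ S ⊆ F ∧ ∀ G : Set P, IsDFilter 𝓓 G → S ⊆ G → F ⊆ G

/-- A nonempty `α`-generated `𝓓`-filter. -/
def GoodFilter {P : Type u} [PartialOrder P] (𝓓 : Set (Set P)) (α : Cardinal.{u})
    (F : Set P) : Prop :=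
  F.Nonempty ∧ IsDFilter 𝓓 F ∧ ∃ S : Set P, Cardinal.mk ↥S < α ∧ SmallestDFilter 𝓓 S F

/-- A nonempty finitely generated `𝓓`-filter. -/
def GoodFilterFin {P : Type u} [PartialOrder P] (𝓓 : Set (Set P)) (F : Set P) : Prop :=
  F.Nonempty ∧ IsDFilter 𝓓 F ∧ ∃ S : Set P, S.Finite ∧ SmallestDFilter 𝓓 S F

theorem lbEq_aux {P L : Type u} [PartialOrder P] [Lattice L]
    (𝓓 : Set (Set P)) (f : P → L) (hfm : Monotone f)
    (hfD : ∀ S ∈ 𝓓, ∀ m : P, IsGLB S m → IsGLB (f '' S) (f m))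
    {S F : Set P} (h : SmallestDFilter 𝓓 S F) :
    lowerBounds (f '' F) = lowerBounds (f '' S) := by
  obtain ⟨hF, hSF, hmin⟩ := h
  apply Set.Subset.antisymm
  · exact lowerBounds_mono_set (Set.image_mono (f := f) hSF)
  · intro l hl
    have hG : IsDFilter 𝓓 {p | l ≤ f p} := by
      constructor
      · intro a b hab ha
        exact le_trans ha (hfm hab)
      · intro T hT hTsub m hm
        exact (hfD T hT m hm).2 (by rintro _ ⟨t, ht, rfl⟩; exact hTsub ht)
    have hFG : F ⊆ {p | l ≤ f p} := hmin _ hG (fun s hs => hl ⟨s, hs, rfl⟩)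
    rintro _ ⟨p, hp, rfl⟩
    exact hFG hp

/-- a `𝓓`-morphism into a lattice has enough meets for `e_X : p ↦ p^↑`,
where `e_X` maps into the nonempty finitely generated `𝓓`-filters under reverse inclusion;
moreover the relevant infimum is the infimum of `f '' S` for any finite generating set `S`. -/
theorem Dmorphism_enough_meets {P L : Type u} [PartialOrder P] [Lattice L]
    (𝓓 : Set (Set P)) (h𝓓 : IsMeetSpec 𝓓) (hfin : ∀ S ∈ 𝓓, S.Finite)
    (eX : P → ({F : Set P // GoodFilterFin 𝓓 F})ᵒᵈ)
    (heX : ∀ p : P, (OrderDual.ofDual (eX p)).1 = Set.Ici p)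
    (f : P → L) (hfm : Monotone f)
    (hfD : ∀ S ∈ 𝓓, ∀ m : P, IsGLB S m → IsGLB (f '' S) (f m)) :
    ∀ x : ({F : Set P // GoodFilterFin 𝓓 F})ᵒᵈ,
      ∃ q : L, IsGLB (f '' (eX ⁻¹' Set.Ici x)) q ∧
        ∀ S : Set P, S.Finite → SmallestDFilter 𝓓 S (OrderDual.ofDual x).1 →
          IsGLB (f '' S) q := by
  intro x
  obtain ⟨hne, hDF, S₀, hS₀fin, hgen⟩ := (OrderDual.ofDual x).2
  set F := (OrderDual.ofDual x).1 with hFdef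
  have hpre : eX ⁻¹' Set.Ici x = F := by
    ext p
    have hle : eX p ∈ Set.Ici x ↔ (OrderDual.ofDual (eX p)).1 ⊆ F := Iff.rfl
    rw [Set.mem_preimage, hle, heX p]
    constructor
    · intro h; exact h (le_refl p)
    · intro h q hq; exact hDF.1 hq h
  have hlb0 := lbEq_aux 𝓓 f hfm hfD hgen
  have hq : ∃ q, IsGreatest (lowerBounds (f '' F)) q := by
    rcases Set.eq_empty_or_nonempty S₀ with h0 | h0
    · obtain ⟨p₀, hp₀⟩ := hne
      refine ⟨f p₀, ?_, ?_⟩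
      · rw [hlb0, h0]
        simp [lowerBounds]
      · intro l hl
        exact hl ⟨p₀, hp₀, rfl⟩
    · have hne' : hS₀fin.toFinset.Nonempty := by
        obtain ⟨s, hs⟩ := h0
        exact ⟨s, hS₀fin.mem_toFinset.2 hs⟩
      refine ⟨hS₀fin.toFinset.inf' hne' f, ?_, ?_⟩
      · rw [hlb0]
        rintro _ ⟨p, hp, rfl⟩
        exact Finset.inf'_le f (hS₀fin.mem_toFinset.2 hp)
      · intro l hl
        rw [hlb0] at hl
        exact Finset.le_inf' hne' f (fun p hp => hl ⟨p, hS₀fin.mem_toFinset.1 hp, rfl⟩)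
  obtain ⟨q, hq⟩ := hq
  refine ⟨q, ?_, ?_⟩
  · rw [hpre]
    exact hq
  · intro S hSfin hS
    have hlb := lbEq_aux 𝓓 f hfm hfD hS
    show IsGreatest (lowerBounds (f '' S)) q
    rw [← hlb]
    exact hq
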